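/- Let k₁ ∈ (0,1], k₂ > 1, f̄₂ > 0, and suppose λ₄ is the unique positive root of P(λ; k₁, k₂) = f̄₂[k₂λ⁴ + (3k₂+2k₁k₂)λ³ + (2k₂−2+4k₁k₂−4k₁)λ² − (3+2k₁)λ − 1]. Then λ₄ > 1/k₂. Consequently, for two builders with v̄₁/f̄₁ = v̄₂/f̄₂ = k₁ and f̄₁/f̄₂ = k₂ > 1, the equilibrium ratio satisfies h₁*/h₂* = 1/λ₄ < k₂. -/
import Mathlib


/-- If k₂ > 1, the unique positive root λ₄ of the quartic exceeds 1/k₂, so the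
equilibrium ratio satisfies h₁*/h₂* = 1/λ₄ < k₂. -/
theorem stmt_18 (k1 k2 f2 lam4 h1 h2 : ℝ)
    (hk1 : k1 ∈ Set.Ioc (0:ℝ) 1) (hk2 : 1 < k2) (hf2 : 0 < f2)
    (hlam_pos : 0 < lam4)
    (hroot : f2 * (k2 * lam4 ^ 4 + (3 * k2 + 2 * k1 * k2) * lam4 ^ 3
      + (2 * k2 - 2 + 4 * k1 * k2 - 4 * k1) * lam4 ^ 2 - (3 + 2 * k1) * lam4 - 1) = 0)
    (huniq : ∀ x : ℝ, 0 < x →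
      f2 * (k2 * x ^ 4 + (3 * k2 + 2 * k1 * k2) * x ^ 3
        + (2 * k2 - 2 + 4 * k1 * k2 - 4 * k1) * x ^ 2 - (3 + 2 * k1) * x - 1) = 0 → x = lam4)
    (hh1 : 0 < h1) (hh2 : h2 = lam4 * h1) :
    1 / k2 < lam4 ∧ h1 / h2 = 1 / lam4 ∧ h1 / h2 < k2 := by
  obtain ⟨hk1p, hk1le⟩ := hk1
  have hk2p : (0:ℝ) < k2 := by linarith
  set F : ℝ → ℝ := fun x => f2 * (k2 * x ^ 4 + (3 * k2 + 2 * k1 * k2) * x ^ 3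
      + (2 * k2 - 2 + 4 * k1 * k2 - 4 * k1) * x ^ 2 - (3 + 2 * k1) * x - 1) with hF
  have hcont : Continuous F := by fun_prop
  -- F(1/k2) < 0
  have hFc : F (1 / k2) < 0 := by
    have hQ : k2 * (1/k2) ^ 4 + (3 * k2 + 2 * k1 * k2) * (1/k2) ^ 3
        + (2 * k2 - 2 + 4 * k1 * k2 - 4 * k1) * (1/k2) ^ 2 - (3 + 2 * k1) * (1/k2) - 1 < 0 := by
      have hk2ne : (k2:ℝ) ≠ 0 := ne_of_gt hk2p
      have heq : k2 * (1/k2) ^ 4 + (3 * k2 + 2 * k1 * k2) * (1/k2) ^ 3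
          + (2 * k2 - 2 + 4 * k1 * k2 - 4 * k1) * (1/k2) ^ 2 - (3 + 2 * k1) * (1/k2) - 1
          = ((k2 - 1) * (2 * k1 * k2 - (1 + k2) ^ 2)) / k2 ^ 3 := by
        field_simp
        ring
      rw [heq]
      apply div_neg_of_neg_of_pos _ (by positivity)
      have h1 : 0 < k2 - 1 := by linarith
      have h2 : 2 * k1 * k2 - (1 + k2) ^ 2 < 0 := by nlinarith
      exact mul_neg_of_pos_of_neg h1 h2
    exact mul_neg_of_pos_of_neg hf2 hQ
  have hF3 : 0 < F 3 := by
    have : (0:ℝ) < k2 * 3 ^ 4 + (3 * k2 + 2 * k1 * k2) * 3 ^ 3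
        + (2 * k2 - 2 + 4 * k1 * k2 - 4 * k1) * 3 ^ 2 - (3 + 2 * k1) * 3 - 1 := by
      nlinarith [mul_pos hk1p hk2p]
    exact mul_pos hf2 this
  have hcle : (1:ℝ)/k2 ≤ 3 := by
    rw [div_le_iff₀ hk2p]; linarith
  have hsub := intermediate_value_Icc hcle hcont.continuousOn
  have h0mem : (0:ℝ) ∈ Set.Icc (F (1/k2)) (F 3) := ⟨le_of_lt hFc, le_of_lt hF3⟩
  obtain ⟨x, ⟨hx1, hx2⟩, hFx⟩ := hsub h0mem
  have hxpos : 0 < x := lt_of_lt_of_le (by positivity) hx1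
  have hxeq : x = lam4 := huniq x hxpos hFx
  have hne : x ≠ 1/k2 := by
    intro h; rw [h] at hFx; rw [hFx] at hFc; exact lt_irrefl 0 hFc
  have hlt : 1/k2 < lam4 := hxeq ▸ lt_of_le_of_ne hx1 (Ne.symm hne)
  have hratio : h1 / h2 = 1 / lam4 := by
    rw [hh2, mul_comm, div_mul_eq_div_div]
    rw [div_self (ne_of_gt hh1)]
  refine ⟨hlt, hratio, ?_⟩
  rw [hratio]
  rw [div_lt_iff₀ hlam_pos]
  have := (div_lt_iff₀ hk2p).mp hlt
  linarith
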